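/- Let Φ be a root system of a finite-dimensional complex simple Lie algebra with at most two root lengths whose squared lengths differ by a factor of 2 or 3, let ℓ be an odd positive integer not divisible by 3 when the factor 3 occurs, and let λ be a weight. If α₁, α₂ are positive roots with (λ+ρ, α₁^∨) ≡ 0 (mod ℓ) and (λ+ρ, α₂^∨) ≡ 0 (mod ℓ), and a₁α₁ + a₂α₂ is a positive root for integers a₁, a₂, then (λ+ρ, (a₁α₁+a₂α₂)^∨) ≡ 0 (mod ℓ). -/

import Mathlib

/-!
STATEMENT 0: Root system computation (Theorem `quantumwild`, key calculation).
`E` is a Euclidean space carrying the root system, `Φpos` the set of positive roots,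
normalized so that squared lengths lie in a set with at most two values differing by a
factor of 2 or 3; `lr = λ + ρ`.  The coroot pairing is `(μ, α^∨) = 2⟪μ,α⟫/⟪α,α⟫`.
-/

open scoped RealInnerProductSpace

theorem stmt_0
    (E : Type*) [NormedAddCommGroup E] [InnerProductSpace ℝ E]
    (Φpos : Set E) (lr : E) (ℓ : ℤ) (hℓodd : Odd ℓ) (hℓpos : 0 < ℓ)
    -- normalization: short roots have squared length 2, at most two lengths,
    -- squared lengths differ by a factor of 2 or 3
    (hlen : ∀ α ∈ Φpos, ⟪α, α⟫ = 2 ∨ ⟪α, α⟫ = 4 ∨ ⟪α, α⟫ = 6)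
    (htwo : ¬ ((∃ α ∈ Φpos, ⟪α, α⟫ = 4) ∧ (∃ α ∈ Φpos, ⟪α, α⟫ = 6)))
    -- ℓ is not divisible by 3 when the factor 3 occurs
    (h3 : (∃ α ∈ Φpos, ⟪α, α⟫ = 6) → ¬ (3 ∣ ℓ))
    -- integrality of the coroot pairings of the weight λ (via λ+ρ)
    (hint : ∀ α ∈ Φpos, ∃ n : ℤ, 2 * ⟪lr, α⟫ / ⟪α, α⟫ = (n : ℝ))
    (α₁ α₂ : E) (hα₁ : α₁ ∈ Φpos) (hα₂ : α₂ ∈ Φpos)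
    (hc₁ : ∃ r : ℤ, 2 * ⟪lr, α₁⟫ / ⟪α₁, α₁⟫ = ((ℓ * r : ℤ) : ℝ))
    (hc₂ : ∃ s : ℤ, 2 * ⟪lr, α₂⟫ / ⟪α₂, α₂⟫ = ((ℓ * s : ℤ) : ℝ))
    (a₁ a₂ : ℤ) (hsum : (a₁ : ℝ) • α₁ + (a₂ : ℝ) • α₂ ∈ Φpos) :
    ∃ t : ℤ, 2 * ⟪lr, (a₁ : ℝ) • α₁ + (a₂ : ℝ) • α₂⟫ /
        ⟪(a₁ : ℝ) • α₁ + (a₂ : ℝ) • α₂, (a₁ : ℝ) • α₁ + (a₂ : ℝ) • α₂⟫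
      = ((ℓ * t : ℤ) : ℝ) := by
  set β : E := (a₁ : ℝ) • α₁ + (a₂ : ℝ) • α₂ with hβ
  obtain ⟨n, hn⟩ := hint β hsum
  obtain ⟨r, hr⟩ := hc₁
  obtain ⟨s, hs⟩ := hc₂
  -- squared lengths as integers
  have getc : ∀ γ : E, γ ∈ Φpos → ∃ c : ℤ, ⟪γ, γ⟫ = (c : ℝ) ∧ (c = 2 ∨ c = 4 ∨ c = 6) := by
    intro γ hγ
    rcases hlen γ hγ with h | h | h
    · exact ⟨2, by rw [h]; norm_num, Or.inl rfl⟩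
    · exact ⟨4, by rw [h]; norm_num, Or.inr (Or.inl rfl)⟩
    · exact ⟨6, by rw [h]; norm_num, Or.inr (Or.inr rfl)⟩
  obtain ⟨c₁, hcc₁, hcv₁⟩ := getc α₁ hα₁
  obtain ⟨c₂, hcc₂, hcv₂⟩ := getc α₂ hα₂
  obtain ⟨cβ, hccβ, hcvβ⟩ := getc β hsum
  have hne : ∀ c : ℤ, (c = 2 ∨ c = 4 ∨ c = 6) → ((c : ℝ) ≠ 0) := by
    rintro c (rfl | rfl | rfl) <;> norm_num
  -- clear denominators
  have e1 : 2 * ⟪lr, α₁⟫ = ((ℓ * r : ℤ) : ℝ) * (c₁ : ℝ) := by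
    rw [hcc₁] at hr
    field_simp [hne c₁ hcv₁] at hr
    push_cast at hr ⊢
    linarith
  have e2 : 2 * ⟪lr, α₂⟫ = ((ℓ * s : ℤ) : ℝ) * (c₂ : ℝ) := by
    rw [hcc₂] at hs
    field_simp [hne c₂ hcv₂] at hs
    push_cast at hs ⊢
    linarith
  have en : 2 * ⟪lr, β⟫ = (n : ℝ) * (cβ : ℝ) := by
    rw [hccβ] at hn
    field_simp [hne cβ hcvβ] at hn
    linarith
  -- expand the inner product
  have eexp : 2 * ⟪lr, β⟫ = (a₁ : ℝ) * (2 * ⟪lr, α₁⟫) + (a₂ : ℝ) * (2 * ⟪lr, α₂⟫) := by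
    rw [hβ, inner_add_right, real_inner_smul_right, real_inner_smul_right]
    ring
  have ekeyR : (n : ℝ) * (cβ : ℝ) = ((ℓ * (a₁ * r * c₁ + a₂ * s * c₂) : ℤ) : ℝ) := by
    rw [← en, eexp, e1, e2]
    push_cast
    ring
  have ekey : n * cβ = ℓ * (a₁ * r * c₁ + a₂ * s * c₂) := by
    exact_mod_cast ekeyR
  -- coprimality
  have cop2 : IsCoprime (2 : ℤ) ℓ :=
    (Int.prime_two.coprime_iff_not_dvd).mpr (by
      rintro ⟨m, hm⟩
      obtain ⟨k, hk⟩ := hℓodd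
      omega)
  have hcop : IsCoprime ℓ (cβ : ℤ) := by
    rcases hcvβ with rfl | rfl | rfl
    · exact cop2.symm
    · have : IsCoprime ((2 : ℤ) * 2) ℓ := cop2.mul_left cop2
      norm_num at this
      exact this.symm
    · have cop3 : IsCoprime (3 : ℤ) ℓ :=
        (Int.prime_three.coprime_iff_not_dvd).mpr
          (h3 ⟨β, hsum, by rw [hccβ]; norm_num⟩)
      have : IsCoprime ((2 : ℤ) * 3) ℓ := cop2.mul_left cop3
      norm_num at this
      exact this.symm
  have hdvd : ℓ ∣ n := by
    refine hcop.dvd_of_dvd_mul_right ⟨a₁ * r * c₁ + a₂ * s * c₂, ?_⟩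
    linarith [ekey]
  obtain ⟨t, ht⟩ := hdvd
  refine ⟨t, hn.trans ?_⟩
  exact_mod_cast congrArg (Int.cast : ℤ → ℝ) ht
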